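/- Let E be a finite-dimensional valued K-vector space over a complete algebraically closed non-trivially valued field K, with basis x = (x₀,…,x_{m−1}) and reduced valuation u. Then vol_x E = Σ_{i<m} u(x_i + F_i), where F_i = span(x_j : j < i) and u(x_i + F_i) = sup{u(y) : y ∈ x_i + F_i}. -/

import Mathlib

open scoped TensorProduct

/-- The tensor power valuation `u^{⊗ι}` on `⨂[K] (i : ι), E`. -/
noncomputable def powVal {K : Type*} [Field K] {ι : Type*} [Fintype ι]
    {E : Type*} [AddCommGroup E] [Module K E]
    (u : E → EReal) (z : PiTensorProduct K (fun _ : ι => E)) : EReal :=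
  sSup { r : EReal | ∃ P : List (ι → E),
    (P.map fun f => PiTensorProduct.tprod K f).sum = z ∧
    r = (P.map fun f => ∑ i, u (f i)).foldr min ⊤ }

/-- The antisymmetrized tensor `x^∧`. -/
noncomputable def wedgeTensor (K : Type*) [Field K] {ι : Type*} [Fintype ι] [DecidableEq ι]
    {E : Type*} [AddCommGroup E] [Module K E] (x : ι → E) :
    PiTensorProduct K (fun _ : ι => E) :=
  ∑ σ : Equiv.Perm ι, ((Equiv.Perm.sign σ : ℤ) • PiTensorProduct.tprod K (fun i => x (σ i)))


/-- coe of real sum into EReal -/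
lemma vvv_coe_sum {α : Type*} (s : Finset α) (f : α → ℝ) :
    ((∑ i ∈ s, f i : ℝ) : EReal) = ∑ i ∈ s, ((f i : ℝ) : EReal) :=
  map_sum (⟨⟨Real.toEReal, EReal.coe_zero⟩, fun x y => EReal.coe_add x y⟩ : ℝ →+ EReal) f s

lemma vvv_le_of_forall_pos {x : EReal} {y : ℝ} (h : ∀ ε : ℝ, 0 < ε → x ≤ (y + ε : ℝ)) :
    x ≤ (y : EReal) := by
  induction x with
  | bot => exact bot_le
  | coe a =>
      have : ∀ ε : ℝ, 0 < ε → a ≤ y + ε := fun ε hε => by exact_mod_cast h ε hε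
      exact_mod_cast le_of_forall_pos_le_add this
  | top =>
      exfalso
      have := h 1 one_pos
      rw [top_le_iff] at this
      exact (EReal.coe_ne_top _) this

lemma vvv_ge_of_forall_pos {x : EReal} {y : ℝ} (h : ∀ ε : ℝ, 0 < ε → ((y - ε : ℝ) : EReal) ≤ x) :
    (y : EReal) ≤ x := by
  induction x with
  | bot =>
      exfalso
      have := h 1 one_pos
      rw [le_bot_iff] at this
      exact (EReal.coe_ne_bot _) this
  | coe a =>
      have : ∀ ε : ℝ, 0 < ε → y - ε ≤ a := fun ε hε => by exact_mod_cast h ε hε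
      have : y ≤ a := by
        by_contra hc
        push_neg at hc
        have := this ((y - a)/2) (by linarith)
        linarith
      exact_mod_cast this
  | top => exact le_top

lemma vvv_eq_top_of_forall {x : EReal} (h : ∀ r : ℝ, (r : EReal) ≤ x) : x = ⊤ := by
  induction x with
  | bot => have := h 0; rw [le_bot_iff] at this; exact absurd this (EReal.coe_ne_bot _)
  | coe a => have := h (a+1); exfalso; exact_mod_cast (by linarith : ¬ (a+1 ≤ a)) (by exact_mod_cast this)
  | top => rfl

section foldr
variable {α : Type*} [LinearOrder α] [OrderTop α]

lemma vvv_foldr_min_le {l : List α} {a : α} (ha : a ∈ l) : l.foldr min ⊤ ≤ a := by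
  induction l with
  | nil => cases ha
  | cons b t ih =>
      rcases List.mem_cons.1 ha with rfl | ha
      · exact min_le_left _ _
      · exact le_trans (min_le_right _ _) (ih ha)

lemma vvv_foldr_min_mem (l : List α) : l.foldr min ⊤ = ⊤ ∨ l.foldr min ⊤ ∈ l := by
  induction l with
  | nil => exact Or.inl rfl
  | cons b t ih =>
      rcases le_total b (t.foldr min ⊤) with h | h
      · right; simp [min_eq_left h]
      · rcases ih with h2 | h2
        · rw [List.foldr_cons, h2]
          right; simp [min_eq_right h, h2 ▸ h]
        · right
          rw [List.foldr_cons]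
          rcases eq_or_lt_of_le h with he | _
          · simp [min_eq_right h]
            right; exact h2
          · simp [min_eq_right h]
            right; exact h2

lemma vvv_foldr_min_const {l : List α} {s : α} (h : ∀ a ∈ l, a = s) (hne : l ≠ []) :
    l.foldr min ⊤ = s := by
  induction l with
  | nil => exact absurd rfl hne
  | cons b t ih =>
      rcases eq_or_ne t [] with rfl | ht
      · simp [h b (by simp)]
      · rw [List.foldr_cons, ih (fun a ha => h a (by simp [ha])) ht,
          h b (by simp), min_self]
end foldr

section val
variable {K : Type*} [Field K] {v : K → EReal}

lemma vvv_v_one (hvbot : ∀ a, v a ≠ ⊥) (hvmul : ∀ a b, v (a*b) = v a + v b)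
    (hker : ∀ a : K, v a = ⊤ → a = 0) : v 1 = 0 := by
  have h := hvmul 1 1
  rw [one_mul] at h
  generalize hv : v 1 = w at h ⊢
  induction w with
  | bot => exact absurd hv (hvbot 1)
  | coe a =>
      have : a = a + a := by exact_mod_cast h
      have : a = 0 := by linarith
      rw [this]; rfl
  | top => exact absurd (hker 1 hv) one_ne_zero

lemma vvv_v_neg_one (hvbot : ∀ a, v a ≠ ⊥) (hvmul : ∀ a b, v (a*b) = v a + v b)
    (hker : ∀ a : K, v a = ⊤ → a = 0) : v (-1) = 0 := by
  have h := hvmul (-1) (-1)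
  rw [neg_one_mul, neg_neg, vvv_v_one hvbot hvmul hker] at h
  generalize hv : v (-1) = w at h ⊢
  induction w with
  | bot => exact absurd hv (hvbot _)
  | coe a =>
      have : (0:ℝ) = a + a := by exact_mod_cast h
      have : a = 0 := by linarith
      rw [this]; rfl
  | top => exact absurd (hker _ hv) (by norm_num)

lemma vvv_v_intunit (hvbot : ∀ a, v a ≠ ⊥) (hvmul : ∀ a b, v (a*b) = v a + v b)
    (hker : ∀ a : K, v a = ⊤ → a = 0) (s : ℤˣ) : v (((s:ℤ) : K)) = 0 := by
  rcases Int.units_eq_one_or s with h | h <;> rw [h] <;> push_cast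
  · exact vvv_v_one hvbot hvmul hker
  · exact vvv_v_neg_one hvbot hvmul hker

lemma vvv_v_prod (hvbot : ∀ a, v a ≠ ⊥) (hvmul : ∀ a b, v (a*b) = v a + v b)
    (hker : ∀ a : K, v a = ⊤ → a = 0) {α : Type*} (s : Finset α) (f : α → K) :
    v (∏ i ∈ s, f i) = ∑ i ∈ s, v (f i) := by
  classical
  induction s using Finset.induction with
  | empty => simpa using vvv_v_one hvbot hvmul hker
  | insert a s hx ih =>
                    rw [Finset.prod_insert hx, Finset.sum_insert hx, hvmul, ih]

lemma vvv_v_listsum (hv0 : v 0 = ⊤) (hvadd : ∀ a b, min (v a) (v b) ≤ v (a + b))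
    (l : List K) : (l.map v).foldr min ⊤ ≤ v l.sum := by
  induction l with
  | nil => simp [hv0]
  | cons a t ih =>
      rw [List.map_cons, List.foldr_cons, List.sum_cons]
      exact le_trans (min_le_min le_rfl ih) (hvadd a t.sum)

lemma vvv_v_real (hvbot : ∀ a, v a ≠ ⊥) (hker : ∀ a : K, v a = ⊤ → a = 0)
    {a : K} (ha : a ≠ 0) : v a = ((v a).toReal : ℝ) :=
  (EReal.coe_toReal (fun h => ha (hker a h)) (hvbot a)).symm

end val

section uval
variable {K E : Type*} [Field K] [AddCommGroup E] [Module K E] {v : K → EReal} {u : E → EReal}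

lemma vvv_u_neg (hvbot : ∀ a, v a ≠ ⊥) (hvmul : ∀ a b, v (a*b) = v a + v b)
    (hker : ∀ a : K, v a = ⊤ → a = 0)
    (husmul : ∀ (a : K) (x : E), u (a • x) = v a + u x) (x : E) : u (-x) = u x := by
  rw [← neg_one_smul K x, husmul, vvv_v_neg_one hvbot hvmul hker, zero_add]

lemma vvv_u_zero (hv0 : v 0 = ⊤) (hubot : ∀ x, u x ≠ ⊥)
    (husmul : ∀ (a : K) (x : E), u (a • x) = v a + u x) : u (0 : E) = ⊤ := by
  have h := husmul 0 0
  rw [zero_smul, hv0] at h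
  rw [h]
  exact EReal.top_add_of_ne_bot (hubot 0)

lemma vvv_u_real (hubot : ∀ x, u x ≠ ⊥) (hured : ∀ x : E, u x = ⊤ → x = 0)
    {x : E} (hx : x ≠ 0) : u x = ((u x).toReal : ℝ) :=
  (EReal.coe_toReal (fun h => hx (hured x h)) (hubot x)).symm

end uval


section linalg
variable {K E : Type*} [Field K] [AddCommGroup E] [Module K E] {m : ℕ}
  (b : Module.Basis (Fin m) K E) (y : Fin m → E)

lemma vvv_ltset (i : Fin m) : {j : Fin m | j < i} = {j : Fin m | (j:ℕ) < (i:ℕ)} := by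
  ext j; exact Fin.lt_def

lemma vvv_span_eq
    (hy : ∀ i, y i - b i ∈ Submodule.span K (⇑b '' {j : Fin m | j < i})) (k : ℕ) :
    Submodule.span K (⇑b '' {j : Fin m | (j:ℕ) < k})
      = Submodule.span K (y '' {j : Fin m | (j:ℕ) < k}) := by
  induction k with
  | zero => simp
  | succ k ih =>
      by_cases hk : k < m
      · set i : Fin m := ⟨k, hk⟩ with hi
        have hset : {j : Fin m | (j:ℕ) < k+1} = insert i {j : Fin m | (j:ℕ) < k} := by
          ext j
          simp only [Set.mem_setOf_eq, Set.mem_insert_iff, Nat.lt_succ_iff_lt_or_eq]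
          constructor
          · rintro (h | h)
            · exact Or.inr h
            · exact Or.inl (Fin.ext h)
          · rintro (h | h)
            · exact Or.inr (by rw [h])
            · exact Or.inl h
        have hdi : y i - b i ∈ Submodule.span K (⇑b '' {j : Fin m | (j:ℕ) < k}) := by
          have := hy i
          rwa [vvv_ltset] at this
        rw [hset, Set.image_insert_eq, Set.image_insert_eq,
          Submodule.span_insert, Submodule.span_insert, ih]
        set S := Submodule.span K (y '' {j : Fin m | (j:ℕ) < k}) with hS
        have hdS : y i - b i ∈ S := by rw [← ih]; exact hdi
        apply le_antisymm
        · rw [sup_le_iff]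
          constructor
          · rw [Submodule.span_singleton_le_iff_mem]
            have h1 : y i ∈ Submodule.span K {y i} ⊔ S :=
              Submodule.mem_sup_left (Submodule.mem_span_singleton_self _)
            have h2 : y i - b i ∈ Submodule.span K {y i} ⊔ S := Submodule.mem_sup_right hdS
            have := Submodule.sub_mem _ h1 h2
            simpa using this
          · exact le_sup_right
        · rw [sup_le_iff]
          constructor
          · rw [Submodule.span_singleton_le_iff_mem]
            have h1 : b i ∈ Submodule.span K {b i} ⊔ S :=
              Submodule.mem_sup_left (Submodule.mem_span_singleton_self _)
            have h2 : y i - b i ∈ Submodule.span K {b i} ⊔ S := Submodule.mem_sup_right hdS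
            have := Submodule.add_mem _ h1 h2
            simpa using this
          · exact le_sup_right
      · have hset : {j : Fin m | (j:ℕ) < k+1} = {j : Fin m | (j:ℕ) < k} := by
          ext j
          have hj := j.isLt
          simp only [Set.mem_setOf_eq]
          omega
        rw [hset, ih]

lemma vvv_basis_exists
    (hy : ∀ i, y i - b i ∈ Submodule.span K (⇑b '' {j : Fin m | j < i})) :
    ∃ cy : Module.Basis (Fin m) K E, ⇑cy = y := by
  classical
  set g : E →ₗ[K] E := b.constr K y with hg
  have hgb : ∀ i, g (b i) = y i := fun i => b.constr_basis K y i
  set Mt := LinearMap.toMatrix b b g with hMt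
  have hrepr : ∀ i j : Fin m, (j : ℕ) ≤ (i : ℕ) → i ≠ j → b.repr (y j) i = 0 := by
    intro i j hle hne
    have hmem : y j - b j ∈ Submodule.span K (⇑b '' {l : Fin m | (l:ℕ) < (j:ℕ)}) := by
      have := hy j; rwa [vvv_ltset] at this
    rw [Module.Basis.mem_span_image] at hmem
    have hnotin : i ∉ (b.repr (y j - b j)).support := by
      intro h
      have := hmem h
      simp only [Set.mem_setOf_eq] at this
      omega
    rw [Finsupp.notMem_support_iff] at hnotin
    have : b.repr (y j) i = b.repr (b j) i + b.repr (y j - b j) i := by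
      have hsum : y j = b j + (y j - b j) := by abel
      conv_lhs => rw [hsum]
      rw [map_add, Finsupp.add_apply]
    rw [this, hnotin, Module.Basis.repr_self, add_zero, Finsupp.single_apply, if_neg (fun h => hne h.symm)]
  have hdiag : ∀ i : Fin m, b.repr (y i) i = 1 := by
    intro i
    have hmem : y i - b i ∈ Submodule.span K (⇑b '' {l : Fin m | (l:ℕ) < (i:ℕ)}) := by
      have := hy i; rwa [vvv_ltset] at this
    rw [Module.Basis.mem_span_image] at hmem
    have hnotin : i ∉ (b.repr (y i - b i)).support := by
      intro h
      have := hmem h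
      simp only [Set.mem_setOf_eq] at this
      omega
    rw [Finsupp.notMem_support_iff] at hnotin
    have : b.repr (y i) i = b.repr (b i) i + b.repr (y i - b i) i := by
      have hsum : y i = b i + (y i - b i) := by abel
      conv_lhs => rw [hsum]
      rw [map_add, Finsupp.add_apply]
    rw [this, hnotin, Module.Basis.repr_self, add_zero, Finsupp.single_apply, if_pos rfl]
  have htri : Mt.BlockTriangular id := by
    intro i j hij
    rw [hMt, LinearMap.toMatrix_apply, hgb]
    exact hrepr i j (le_of_lt hij) (ne_of_gt hij)
  have hdet : Mt.det = 1 := by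
    rw [Matrix.det_of_upperTriangular htri]
    apply Finset.prod_eq_one
    intro i _
    rw [hMt, LinearMap.toMatrix_apply, hgb, hdiag]
  have hunit : IsUnit (LinearMap.toMatrix b b g).det := by
    rw [← hMt, hdet]; exact isUnit_one
  refine ⟨b.map (LinearEquiv.ofIsUnitDet hunit), funext fun i => ?_⟩
  rw [Module.Basis.map_apply]
  have : (LinearEquiv.ofIsUnitDet hunit : E →ₗ[K] E) = g := LinearEquiv.coe_ofIsUnitDet hunit
  calc (LinearEquiv.ofIsUnitDet hunit) (b i)
      = ((LinearEquiv.ofIsUnitDet hunit : E →ₗ[K] E)) (b i) := rfl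
    _ = g (b i) := by rw [this]
    _ = y i := hgb i

end linalg

section wedge
variable {K E : Type*} [Field K] [AddCommGroup E] [Module K E] {m : ℕ}

lemma vvv_wedge_alt (x : Fin m → E) :
    wedgeTensor K x
      = MultilinearMap.alternatization
          (PiTensorProduct.tprod K (s := fun _ : Fin m => E)) x := by
  rw [MultilinearMap.alternatization_apply, wedgeTensor]
  refine Finset.sum_congr rfl fun σ _ => ?_
  rw [MultilinearMap.domDomCongr_apply, Units.smul_def]

lemma vvv_wedge_eq (b : Module.Basis (Fin m) K E) (y : Fin m → E)
    (hy : ∀ i, y i - b i ∈ Submodule.span K (⇑b '' {j : Fin m | j < i})) :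
    wedgeTensor K ⇑b = wedgeTensor K y := by
  classical
  set W := MultilinearMap.alternatization
      (PiTensorProduct.tprod K (s := fun _ : Fin m => E)) with hW
  rw [vvv_wedge_alt, vvv_wedge_alt, ← hW]
  have key : ∀ k : ℕ, W (fun i => if (i:ℕ) < k then y i else b i) = W ⇑b := by
    intro k
    induction k with
    | zero => congr 1
    | succ k ih =>
        by_cases hk : k < m
        · set i0 : Fin m := ⟨k, hk⟩ with hi0
          set z : Fin m → E := fun i => if (i:ℕ) < k then y i else b i with hz
          have hz' : (fun i : Fin m => if (i:ℕ) < k+1 then y i else b i)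
              = Function.update z i0 (y i0) := by
            funext j
            rcases eq_or_ne j i0 with rfl | hne
            · simp [Function.update_self, hi0]
            · rw [Function.update_of_ne hne, hz]
              have : (j:ℕ) ≠ k := fun h => hne (Fin.ext h)
              by_cases hjk : (j:ℕ) < k
              · simp [hjk, Nat.lt_succ_of_lt hjk]
              · have : ¬ (j:ℕ) < k + 1 := by omega
                simp [hjk, this]
          have hzz : z = Function.update z i0 (b i0) := by
            funext j
            rcases eq_or_ne j i0 with rfl | hne
            · simp [Function.update_self, hz, hi0]
            · rw [Function.update_of_ne hne]
          have hsplit : W (Function.update z i0 (y i0))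
              = W (Function.update z i0 (b i0))
                + W (Function.update z i0 (y i0 - b i0)) := by
            have h2 := W.map_update_add z i0 (b i0) (y i0 - b i0)
            have hba : b i0 + (y i0 - b i0) = y i0 := by abel
            rwa [hba] at h2
          have hspan : y i0 - b i0 ∈ Submodule.span K (y '' {j : Fin m | (j:ℕ) < k}) := by
            rw [← vvv_span_eq b y hy k]
            have := hy i0
            rwa [vvv_ltset] at this
          have hzero : W (Function.update z i0 (y i0 - b i0)) = 0 := by
            refine Submodule.span_induction ?_ ?_ ?_ ?_ hspan
            · rintro x ⟨j, hj, rfl⟩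
              refine W.map_eq_zero_of_eq _ (i := j) (j := i0) ?_ ?_
              · have hjk : (j:ℕ) < k := hj
                have hne : j ≠ i0 := fun h => by
                  rw [h] at hjk; simp [hi0] at hjk
                rw [Function.update_of_ne hne, Function.update_self, hz]
                simp [hjk]
              · intro h
                have hjk : (j:ℕ) < k := hj
                rw [h] at hjk; simp [hi0] at hjk
            · rw [W.map_update_zero]
            · intro a c ha hc hpa hpc
              rw [W.map_update_add, hpa, hpc, add_zero]
            · intro a x hx hpx
              rw [W.map_update_smul, hpx, smul_zero]
          rw [hz', hsplit, hzero, add_zero, ← hzz, ih]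
        · have : (fun i : Fin m => if (i:ℕ) < k+1 then y i else b i)
              = (fun i : Fin m => if (i:ℕ) < k then y i else b i) := by
            funext j
            have := j.isLt
            have h1 : (j:ℕ) < k+1 := by omega
            have h2 : (j:ℕ) < k := by omega
            simp [h1, h2]
          rw [this, ih]
  have := key m
  have hym : (fun i : Fin m => if (i:ℕ) < m then y i else b i) = y := by
    funext j; simp [j.isLt]
  rw [hym] at this
  exact this.symm

end wedge

section Lfun
variable {K E : Type*} [Field K] [AddCommGroup E] [Module K E] {m : ℕ}

lemma vvv_perm_id (σ : Equiv.Perm (Fin m)) (h : ∀ i, ¬ σ i < i) : σ = 1 := by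
  have hle : ∀ i : Fin m, (i:ℕ) ≤ ((σ i : Fin m) : ℕ) := by
    intro i
    have := h i
    omega
  have hsum : ∑ i : Fin m, ((i:ℕ)) = ∑ i : Fin m, ((σ i : Fin m) : ℕ) :=
    (Equiv.sum_comp σ (fun j : Fin m => (j:ℕ))).symm
  have := (Finset.sum_eq_sum_iff_of_le (fun i _ => hle i)).1 hsum
  ext i
  exact ((this i (Finset.mem_univ i)).symm : ((σ i : Fin m) : ℕ) = i)

lemma vvv_coordb (b : Module.Basis (Fin m) K E) (y : Fin m → E)
    (hy : ∀ i, y i - b i ∈ Submodule.span K (⇑b '' {j : Fin m | j < i}))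
    (cy : Module.Basis (Fin m) K E) (hcy : ⇑cy = y) :
    ∀ i j : Fin m, (cy.coord i) (b j) = if i = j then 1 else (if i < j then (cy.coord i) (b j) else 0) := by
  intro i j
  by_cases hij : i < j
  · simp [if_neg (ne_of_lt hij), hij]
  · have hle : ¬ i < j := hij
    have hmem : y j - b j ∈ Submodule.span K (⇑cy '' {l : Fin m | (l:ℕ) < (j:ℕ)}) := by
      rw [hcy, ← vvv_span_eq b y hy]
      have := hy j
      rwa [vvv_ltset] at this
    rw [Module.Basis.mem_span_image] at hmem
    have hnotin : i ∉ (cy.repr (y j - b j)).support := by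
      intro hmem2
      have := hmem hmem2
      simp only [Set.mem_setOf_eq] at this
      have : (i:ℕ) < (j:ℕ) := this
      exact hle (Fin.lt_def.2 this)
    rw [Finsupp.notMem_support_iff] at hnotin
    have hsplit : (cy.coord i) (b j) = cy.repr (y j) i - cy.repr (y j - b j) i := by
      have hsum : b j = y j - (y j - b j) := by abel
      rw [Module.Basis.coord_apply]
      conv_lhs => rw [hsum]
      rw [map_sub, Finsupp.sub_apply]
    rw [hsplit, hnotin, sub_zero, ← hcy, Module.Basis.repr_self, Finsupp.single_apply]
    by_cases hij2 : i = j
    · simp [hij2]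
    · rw [if_neg (fun h : j = i => hij2 h.symm), if_neg hij2, if_neg hle]

lemma vvv_L_wedge (b : Module.Basis (Fin m) K E) (y : Fin m → E)
    (hy : ∀ i, y i - b i ∈ Submodule.span K (⇑b '' {j : Fin m | j < i}))
    (cy : Module.Basis (Fin m) K E) (hcy : ⇑cy = y) :
    PiTensorProduct.lift
        ((MultilinearMap.mkPiAlgebra K (Fin m) K).compLinearMap (fun i => cy.coord i))
      (wedgeTensor K ⇑b) = 1 := by
  classical
  have hcoord := vvv_coordb b y hy cy hcy
  rw [wedgeTensor, map_sum]
  have hterm : ∀ σ : Equiv.Perm (Fin m),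
      PiTensorProduct.lift
        ((MultilinearMap.mkPiAlgebra K (Fin m) K).compLinearMap (fun i => cy.coord i))
        (((Equiv.Perm.sign σ : ℤ)) • PiTensorProduct.tprod K (fun i => b (σ i)))
      = ((Equiv.Perm.sign σ : ℤ)) • ∏ i, (cy.coord i) (b (σ i)) := by
    intro σ
    rw [map_zsmul, PiTensorProduct.lift.tprod, MultilinearMap.compLinearMap_apply,
      MultilinearMap.mkPiAlgebra_apply]
  rw [Finset.sum_congr rfl (fun σ _ => hterm σ)]
  rw [Finset.sum_eq_single 1]
  · have hone : ∀ i : Fin m, (cy.coord i) (b ((1 : Equiv.Perm (Fin m)) i)) = 1 := by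
      intro i
      have := hcoord i i
      simpa using this
    rw [Finset.prod_congr rfl (fun i _ => hone i)]
    simp
  · intro σ _ hσ
    have hex : ∃ i, σ i < i := by
      by_contra hc
      push_neg at hc
      exact hσ (vvv_perm_id σ (fun i => by
        intro h
        exact absurd h (by simpa using (hc i))))
    obtain ⟨i, hi⟩ := hex
    have hzero : (cy.coord i) (b (σ i)) = 0 := by
      have := hcoord i (σ i)
      rw [if_neg (ne_of_gt hi), if_neg (by exact fun h => absurd h (not_lt_of_gt hi))] at this
      exact this
    rw [show (∏ i, (cy.coord i) (b (σ i))) = 0 from Finset.prod_eq_zero (Finset.mem_univ i) hzero,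
      smul_zero]
  · intro h
    exact absurd (Finset.mem_univ 1) h

end Lfun

section sums
lemma vvv_sum_ne_bot {α : Type*} (s : Finset α) (f : α → EReal) (hb : ∀ i ∈ s, f i ≠ ⊥) :
    ∑ i ∈ s, f i ≠ ⊥ := by
  classical
  induction s using Finset.induction with
  | empty => simp
  | insert a s hx ih =>
      rw [Finset.sum_insert hx]
      intro h
      rcases EReal.add_eq_bot_iff.1 h with h2 | h2
      · exact hb a (Finset.mem_insert_self a s) h2
      · exact ih (fun i hi => hb i (Finset.mem_insert_of_mem hi)) h2

lemma vvv_sum_top {α : Type*} (s : Finset α) (f : α → EReal) {j : α} (hj : j ∈ s)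
    (hfj : f j = ⊤) (hb : ∀ i ∈ s, f i ≠ ⊥) : ∑ i ∈ s, f i = ⊤ := by
  classical
  rw [← Finset.add_sum_erase s f hj, hfj]
  exact EReal.top_add_of_ne_bot
    (vvv_sum_ne_bot _ _ (fun i hi => hb i (Finset.mem_of_mem_erase hi)))
end sums

section mainaux
variable {K E : Type*} [Field K] [AddCommGroup E] [Module K E]
variable {v : K → EReal} {u : E → EReal} {m : ℕ}

/-- Lower bound: any coset choice gives a lower bound on the volume. -/
lemma vvv_lower
    (hv0 : v 0 = ⊤) (hvbot : ∀ a, v a ≠ ⊥)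
    (hvmul : ∀ a b, v (a * b) = v a + v b)
    (hker : ∀ a : K, v a = ⊤ → a = 0)
    (husmul : ∀ (a : K) (x : E), u (a • x) = v a + u x)
    (b : Module.Basis (Fin m) K E) (y : Fin m → E)
    (hy : ∀ i, y i - b i ∈ Submodule.span K (⇑b '' {j : Fin m | j < i})) :
    ∑ i, u (y i) ≤ powVal u (wedgeTensor K ⇑b) := by
  classical
  rw [vvv_wedge_eq b y hy]
  set sgnK : Equiv.Perm (Fin m) → K := fun σ => (((Equiv.Perm.sign σ : ℤ)) : K) with hsgnK
  set g : Equiv.Perm (Fin m) → (Fin m → E) :=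
    fun σ => fun i => (if (i:ℕ) = 0 then sgnK σ else 1) • y (σ i) with hg
  set P : List (Fin m → E) := (Finset.univ : Finset (Equiv.Perm (Fin m))).toList.map g with hP
  have hprod : ∀ σ : Equiv.Perm (Fin m),
      (∏ i : Fin m, (if (i:ℕ) = 0 then sgnK σ else 1)) = sgnK σ := by
    intro σ
    rcases Nat.eq_zero_or_pos m with hm | hm
    · have hσ : σ = 1 := by
        ext i
        exact absurd i.isLt (by omega)
      have h1 : (∏ i : Fin m, (if (i:ℕ) = 0 then sgnK σ else 1)) = 1 :=
        Finset.prod_eq_one (fun i _ => absurd i.isLt (by omega))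
      rw [h1, hσ, hsgnK]
      simp
    · set i0 : Fin m := ⟨0, hm⟩ with hi0
      have hiff : ∀ i : Fin m, ((i:ℕ) = 0) ↔ (i = i0) := by
        intro i
        exact ⟨fun h => Fin.ext h, fun h => by rw [h]⟩
      calc (∏ i : Fin m, (if (i:ℕ) = 0 then sgnK σ else 1))
          = ∏ i : Fin m, (if i = i0 then sgnK σ else 1) := by
            refine Finset.prod_congr rfl fun i _ => ?_
            exact if_congr (hiff i) rfl rfl
        _ = sgnK σ := by
            rw [Finset.prod_ite_eq' Finset.univ i0 (fun _ => sgnK σ), if_pos (Finset.mem_univ i0)]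
  have htp : ∀ σ : Equiv.Perm (Fin m),
      PiTensorProduct.tprod K (g σ)
        = ((Equiv.Perm.sign σ : ℤ)) • PiTensorProduct.tprod K (fun i => y (σ i)) := by
    intro σ
    rw [hg]
    have := MultilinearMap.map_smul_univ (PiTensorProduct.tprod K (s := fun _ : Fin m => E))
      (fun i => (if (i:ℕ) = 0 then sgnK σ else 1)) (fun i => y (σ i))
    rw [this, hprod, hsgnK, Int.cast_smul_eq_zsmul]
  have hdecomp : (P.map fun f => PiTensorProduct.tprod K f).sum = wedgeTensor K y := by
    rw [hP, List.map_map]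
    rw [show ((fun f => (PiTensorProduct.tprod K) f) ∘ g) = fun σ => PiTensorProduct.tprod K (g σ)
      from rfl]
    rw [Finset.sum_map_toList]
    rw [wedgeTensor]
    exact Finset.sum_congr rfl fun σ _ => htp σ
  have hval : ∀ f ∈ P, (∑ i, u (f i)) = ∑ i, u (y i) := by
    intro f hf
    rw [hP] at hf
    obtain ⟨σ, _, rfl⟩ := List.mem_map.1 hf
    have hui : ∀ i : Fin m, u (g σ i) = u (y (σ i)) := by
      intro i
      rw [hg]
      simp only
      rw [husmul]
      by_cases h0 : (i:ℕ) = 0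
      · rw [if_pos h0, hsgnK, vvv_v_intunit hvbot hvmul hker, zero_add]
      · rw [if_neg h0, vvv_v_one hvbot hvmul hker, zero_add]
    rw [Finset.sum_congr rfl (fun i _ => hui i)]
    exact Equiv.sum_comp σ (fun j => u (y j))
  have hPne : P ≠ [] := by
    rw [hP]
    simp only [ne_eq, List.map_eq_nil_iff]
    intro h
    have := Finset.univ_nonempty (α := Equiv.Perm (Fin m))
    rw [← Finset.toList_toFinset (Finset.univ : Finset (Equiv.Perm (Fin m)))] at this
    rw [h] at this
    simp at this
  have hfold : ((P.map fun f => ∑ i, u (f i)).foldr min ⊤) = ∑ i, u (y i) := by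
    apply vvv_foldr_min_const
    · intro a ha
      obtain ⟨f, hf, rfl⟩ := List.mem_map.1 ha
      exact hval f hf
    · simpa using hPne
  apply le_sSup
  exact ⟨P, hdecomp, hfold.symm⟩

end mainaux

section upperaux
variable {K E : Type*} [Field K] [AddCommGroup E] [Module K E]
variable {v : K → EReal} {u : E → EReal} {m : ℕ}

/-- Upper bound on the volume via near-optimal coset representatives. -/
lemma vvv_upper
    (hv0 : v 0 = ⊤) (hvbot : ∀ a, v a ≠ ⊥)
    (hvmul : ∀ a b, v (a * b) = v a + v b)
    (hvadd : ∀ a b, min (v a) (v b) ≤ v (a + b))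
    (hker : ∀ a : K, v a = ⊤ → a = 0)
    (hubot : ∀ x, u x ≠ ⊥)
    (husmul : ∀ (a : K) (x : E), u (a • x) = v a + u x)
    (huadd : ∀ x y, min (u x) (u y) ≤ u (x + y))
    (hured : ∀ x : E, u x = ⊤ → x = 0)
    (b : Module.Basis (Fin m) K E) (y : Fin m → E)
    (hy : ∀ i, y i - b i ∈ Submodule.span K (⇑b '' {j : Fin m | j < i}))
    {ε : ℝ} (hε : 0 < ε)
    (hyreal : ∀ i, u (y i) ≠ ⊤)
    (hyc : ∀ (i : Fin m) (w : E),
      w - b i ∈ Submodule.span K (⇑b '' {j : Fin m | j < i}) → u w ≤ u (y i) + (ε : EReal)) :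
    powVal u (wedgeTensor K ⇑b)
      ≤ (∑ i, u (y i)) + (((m : ℝ) * ((m : ℝ) * ε) : ℝ) : EReal) := by
  classical
  obtain ⟨cy, hcy⟩ := vvv_basis_exists b y hy
  have huyreal : ∀ i, u (y i) = (((u (y i)).toReal : ℝ) : EReal) :=
    fun i => (EReal.coe_toReal (hyreal i) (hubot (y i))).symm
  have hreprY : ∀ (i0 l : Fin m), cy.repr (y i0) l = if i0 = l then 1 else 0 := by
    intro i0 l
    rw [← hcy, Module.Basis.repr_self, Finsupp.single_apply]
  -- main pointwise estimate (downward Gram-Schmidt induction)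
  have claimC : ∀ n : ℕ, ∀ w : E, (∀ j : Fin m, n ≤ (j : ℕ) → cy.coord j w = 0) →
      ∀ j : Fin m, u w ≤ v (cy.coord j w) + u (y j) + (((n : ℝ) * ε : ℝ) : EReal) := by
    intro n
    induction n with
    | zero =>
        intro w hw j
        have h0 : cy.coord j w = 0 := hw j (Nat.zero_le _)
        rw [h0, hv0, EReal.top_add_of_ne_bot (hubot (y j)),
          EReal.top_add_of_ne_bot (EReal.coe_ne_bot _)]
        exact le_top
    | succ n ih =>
        intro w hw j
        have hbump : ∀ x : E, ∀ j : Fin m,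
            u x ≤ v (cy.coord j x) + u (y j) + (((n : ℝ) * ε : ℝ) : EReal) →
            u x ≤ v (cy.coord j x) + u (y j) + ((((n+1 : ℕ) : ℝ) * ε : ℝ) : EReal) := by
          intro x j h
          refine le_trans h (add_le_add_right ?_ _)
          rw [EReal.coe_le_coe_iff]
          push_cast
          nlinarith
        by_cases hn : n < m
        · set i0 : Fin m := ⟨n, hn⟩ with hi0
          set a : K := cy.coord i0 w with ha
          by_cases ha0 : a = 0
          · -- coordinate `n` also vanishes, use induction hypothesis directly
            have hw' : ∀ l : Fin m, n ≤ (l : ℕ) → cy.coord l w = 0 := by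
              intro l hl
              rcases eq_or_lt_of_le hl with he | hlt
              · have : l = i0 := Fin.ext (by simp [hi0, ← he])
                rw [this]; exact ha0
              · exact hw l (by omega)
            exact hbump w j (ih w hw' j)
          · have hva : v a = (((v a).toReal : ℝ) : EReal) := vvv_v_real hvbot hker ha0
            have hwne : w ≠ 0 := by
              intro h
              rw [h] at ha
              exact ha0 (by rw [ha]; simp)
            have huw : u w = (((u w).toReal : ℝ) : EReal) := vvv_u_real hubot hured hwne
            -- the normalized vector lies in the coset of `b i0`
            have hBw : u w ≤ v a + u (y i0) + (ε : EReal) := by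
              have hcoordw' : ∀ l : Fin m, cy.coord l (a⁻¹ • w) = a⁻¹ * cy.coord l w := by
                intro l
                rw [Module.Basis.coord_apply, map_smul, Finsupp.smul_apply, Module.Basis.coord_apply,
                  smul_eq_mul]
              have hmem1 : a⁻¹ • w - y i0
                  ∈ Submodule.span K (⇑cy '' {l : Fin m | (l : ℕ) < n}) := by
                rw [Module.Basis.mem_span_image]
                intro l hl
                rw [Finset.mem_coe, Finsupp.mem_support_iff] at hl
                by_contra hc
                apply hl
                simp only [Set.mem_setOf_eq, not_lt] at hc
                have hsplit : cy.repr (a⁻¹ • w - y i0) l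
                    = cy.coord l (a⁻¹ • w) - cy.repr (y i0) l := by
                  rw [map_sub, Finsupp.sub_apply, Module.Basis.coord_apply]
                rw [hsplit, hcoordw', hreprY]
                rcases eq_or_lt_of_le hc with he | hlt
                · have hli : l = i0 := Fin.ext (by simp [hi0, ← he])
                  rw [hli, if_pos rfl, ← ha, inv_mul_cancel₀ ha0, sub_self]
                · have hli : i0 ≠ l := by
                    intro h
                    rw [← h] at hlt
                    simp [hi0] at hlt
                  rw [hw l (by omega), if_neg hli, mul_zero, sub_zero]
              have hmem2 : a⁻¹ • w - b i0
                  ∈ Submodule.span K (⇑b '' {j : Fin m | j < i0}) := by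
                have hsets : {l : Fin m | (l : ℕ) < n} = {j : Fin m | j < i0} := by
                  rw [vvv_ltset]
                have h1 : a⁻¹ • w - y i0
                    ∈ Submodule.span K (⇑b '' {j : Fin m | j < i0}) := by
                  rw [vvv_ltset, vvv_span_eq b y hy]
                  rw [hcy, hsets, vvv_ltset] at hmem1
                  exact hmem1
                have h2 := hy i0
                have := Submodule.add_mem _ h1 h2
                have heq : (a⁻¹ • w - y i0) + (y i0 - b i0) = a⁻¹ • w - b i0 := by abel
                rwa [heq] at this
              have h3 : u (a⁻¹ • w) ≤ u (y i0) + (ε : EReal) := hyc i0 _ hmem2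
              have h4 : u w = v a + u (a⁻¹ • w) := by
                have : a • (a⁻¹ • w) = w := by
                  rw [smul_smul, mul_inv_cancel₀ ha0, one_smul]
                conv_lhs => rw [← this]
                rw [husmul]
              rw [h4, add_assoc]
              exact add_le_add_right h3 _
            rcases Nat.lt_or_ge (j : ℕ) n with hjn | hjn
            · -- j below the top index: subtract the top coordinate
              have hji0 : i0 ≠ j := by
                intro h
                rw [← h] at hjn
                simp [hi0] at hjn
              set w2 : E := w - a • y i0 with hw2
              have hcoord2 : ∀ l : Fin m, cy.coord l w2 = cy.coord l w
                  - a * (if i0 = l then 1 else 0) := by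
                intro l
                rw [hw2, Module.Basis.coord_apply, map_sub, Finsupp.sub_apply, map_smul,
                  Finsupp.smul_apply, hreprY, Module.Basis.coord_apply, smul_eq_mul]
              have hsupp2 : ∀ l : Fin m, n ≤ (l : ℕ) → cy.coord l w2 = 0 := by
                intro l hl
                rw [hcoord2]
                rcases eq_or_lt_of_le hl with he | hlt
                · have hli : l = i0 := Fin.ext (by simp [hi0, ← he])
                  rw [hli, if_pos rfl, mul_one, ← ha, sub_self]
                · have hli : i0 ≠ l := by
                    intro h
                    rw [← h] at hlt
                    simp [hi0] at hlt
                  rw [hw l (by omega), if_neg hli, mul_zero, sub_zero]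
              have hih := ih w2 hsupp2 j
              have hcoordj : cy.coord j w2 = cy.coord j w := by
                rw [hcoord2, if_neg hji0, mul_zero, sub_zero]
              rw [hcoordj] at hih
              -- u w ≤ u w2 + ε
              have hlow : ((((u w).toReal - ε : ℝ)) : EReal) ≤ u w2 := by
                have hmin : min (u w) (u (-(a • y i0))) ≤ u w2 := by
                  have := huadd w (-(a • y i0))
                  rwa [← sub_eq_add_neg, ← hw2] at this
                have hneg : u (-(a • y i0)) = v a + u (y i0) := by
                  rw [vvv_u_neg hvbot hvmul hker husmul, husmul]
                refine le_trans (le_min ?_ ?_) hmin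
                · calc ((((u w).toReal - ε : ℝ)) : EReal)
                      ≤ (((u w).toReal : ℝ) : EReal) := by
                        rw [EReal.coe_le_coe_iff]; linarith
                    _ = u w := huw.symm
                · rw [hneg]
                  have : ((u w).toReal : EReal) ≤ (v a + u (y i0)) + (ε : EReal) := by
                    rw [← huw]; exact hBw
                  rw [hva, huyreal i0, ← EReal.coe_add, ← EReal.coe_add,
                    EReal.coe_le_coe_iff] at this
                  rw [hva, huyreal i0, ← EReal.coe_add, EReal.coe_le_coe_iff]
                  linarith
              have huww2 : u w ≤ u w2 + (ε : EReal) := by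
                rw [huw]
                calc (((u w).toReal : ℝ) : EReal)
                    = ((((u w).toReal - ε : ℝ) + ε : ℝ) : EReal) := by norm_num
                  _ = ((((u w).toReal - ε : ℝ)) : EReal) + (ε : EReal) := EReal.coe_add _ _
                  _ ≤ u w2 + (ε : EReal) := add_le_add_left hlow _
              refine le_trans huww2 (le_trans (add_le_add_left hih _) ?_)
              rw [add_assoc, ← EReal.coe_add]
              apply le_of_eq
              congr 2
              push_cast
              ring
            · rcases eq_or_lt_of_le hjn with he | hlt
              · -- j = i0
                have hji : j = i0 := Fin.ext (by simp [hi0, he])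
                rw [hji, ← ha]
                refine le_trans hBw (add_le_add_right ?_ _)
                rw [EReal.coe_le_coe_iff]
                push_cast
                nlinarith
              · -- coordinate j vanishes
                rw [hw j (by omega), hv0, EReal.top_add_of_ne_bot (hubot (y j)),
                  EReal.top_add_of_ne_bot (EReal.coe_ne_bot _)]
                exact le_top
        · have hw' : ∀ l : Fin m, n ≤ (l : ℕ) → cy.coord l w = 0 :=
            fun l _ => hw l (by have := l.isLt; omega)
          exact hbump w j (ih w hw' j)
  -- now bound the supremum
  apply sSup_le
  rintro r ⟨P, hP, rfl⟩
  set L := PiTensorProduct.lift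
      ((MultilinearMap.mkPiAlgebra K (Fin m) K).compLinearMap (fun i => cy.coord i)) with hL
  have hL1 : L (wedgeTensor K ⇑b) = 1 := vvv_L_wedge b y hy cy hcy
  set t : (Fin m → E) → K := fun f => ∏ i, cy.coord i (f i) with ht
  have hLt : ∀ f : Fin m → E, L (PiTensorProduct.tprod K f) = t f := by
    intro f
    rw [hL, PiTensorProduct.lift.tprod, MultilinearMap.compLinearMap_apply,
      MultilinearMap.mkPiAlgebra_apply]
  have hsum : (P.map t).sum = 1 := by
    have h0 := map_list_sum L (P.map (fun f => PiTensorProduct.tprod K f))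
    rw [hP, hL1, List.map_map] at h0
    have h2 : P.map (⇑L ∘ fun f => PiTensorProduct.tprod K f) = P.map t :=
      List.map_congr_left (fun f _ => hLt f)
    rw [h2] at h0
    exact h0.symm
  have hfold : ((P.map t).map v).foldr min ⊤ ≤ 0 := by
    have h1 := vvv_v_listsum hv0 hvadd (P.map t)
    rw [hsum, vvv_v_one hvbot hvmul hker] at h1
    exact h1
  rcases vvv_foldr_min_mem ((P.map t).map v) with htop | hmem
  · rw [htop] at hfold
    exact absurd hfold (by simp)
  · obtain ⟨tf, htf, heq⟩ := List.mem_map.1 hmem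
    obtain ⟨f, hfP, rfl⟩ := List.mem_map.1 htf
    have hvf : v (t f) ≤ 0 := by rw [heq]; exact hfold
    have hrle : (P.map fun f => ∑ i, u (f i)).foldr min ⊤ ≤ ∑ i, u (f i) :=
      vvv_foldr_min_le (List.mem_map_of_mem hfP)
    refine le_trans hrle ?_
    have hterm : ∀ i : Fin m, u (f i)
        ≤ v (cy.coord i (f i)) + u (y i) + (((m : ℝ) * ε : ℝ) : EReal) := by
      intro i
      exact claimC m (f i) (fun l hl => absurd l.isLt (by omega)) i
    have hsum2 : ∑ i, u (f i)
        ≤ ∑ i, (v (cy.coord i (f i)) + u (y i) + (((m : ℝ) * ε : ℝ) : EReal)) :=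
      Finset.sum_le_sum (fun i _ => hterm i)
    refine le_trans hsum2 ?_
    rw [Finset.sum_add_distrib, Finset.sum_add_distrib]
    have hA : ∑ i, v (cy.coord i (f i)) ≤ 0 := by
      rw [← vvv_v_prod hvbot hvmul hker Finset.univ (fun i => cy.coord i (f i))]
      exact hvf
    have hC : (∑ _i : Fin m, (((m : ℝ) * ε : ℝ) : EReal))
        = (((m : ℝ) * ((m : ℝ) * ε) : ℝ) : EReal) := by
      rw [← vvv_coe_sum Finset.univ (fun _ => ((m : ℝ) * ε : ℝ))]
      congr 1
      rw [Finset.sum_const, Finset.card_univ, Fintype.card_fin, nsmul_eq_mul]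
    rw [hC]
    refine add_le_add_left ?_ _
    calc (∑ i, v (cy.coord i (f i))) + ∑ i, u (y i)
        ≤ 0 + ∑ i, u (y i) := add_le_add_left hA _
      _ = ∑ i, u (y i) := zero_add _
end upperaux


/-- over a complete algebraically closed non-trivially valued field, for a
reduced valued vector space `E` with basis `x`, the volume equals
`Σ_i u(x_i + F_i)` where `F_i = span(x_j : j < i)` and `u(x_i + F_i)` is the quotient
(supremum) value over the coset. -/
theorem volume_eq_sum_quotient_values {K E : Type*} [Field K] [IsAlgClosed K]
    [AddCommGroup E] [Module K E]
    (v : K → EReal) (hv0 : v 0 = ⊤) (hvbot : ∀ a, v a ≠ ⊥)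
    (hvmul : ∀ a b, v (a * b) = v a + v b)
    (hvadd : ∀ a b, min (v a) (v b) ≤ v (a + b))
    (hker : ∀ a : K, v a = ⊤ → a = 0)
    (hnontriv : ∃ a : K, v a ≠ 0 ∧ v a ≠ ⊤)
    (hcomplete : ∀ f : ℕ → K,
      (∀ r : ℝ, ∃ N, ∀ p ≥ N, ∀ q ≥ N, (r : EReal) ≤ v (f p - f q)) →
      ∃ a : K, ∀ r : ℝ, ∃ N, ∀ p ≥ N, (r : EReal) ≤ v (f p - a))
    (u : E → EReal) (hubot : ∀ x, u x ≠ ⊥)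
    (husmul : ∀ (a : K) (x : E), u (a • x) = v a + u x)
    (huadd : ∀ x y, min (u x) (u y) ≤ u (x + y))
    (hured : ∀ x, u x = ⊤ → x = 0)
    {m : ℕ} (b : Module.Basis (Fin m) K E) :
    powVal u (wedgeTensor K ⇑b) =
      ∑ i : Fin m,
        sSup (u '' {y : E | y - b i ∈ Submodule.span K (⇑b '' {j : Fin m | j < i})}) := by
  classical
  set S : Fin m → Set EReal :=
    fun i => u '' {y : E | y - b i ∈ Submodule.span K (⇑b '' {j : Fin m | j < i})} with hS
  set c : Fin m → EReal := fun i => sSup (S i) with hc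
  have hmemcoset : ∀ (i : Fin m) (w : E),
      w - b i ∈ Submodule.span K (⇑b '' {j : Fin m | j < i}) → u w ≤ c i :=
    fun i w hw => le_sSup ⟨w, hw, rfl⟩
  have hbicoset : ∀ i : Fin m, (b i - b i) ∈ Submodule.span K (⇑b '' {j : Fin m | j < i}) := by
    intro i
    rw [sub_self]
    exact Submodule.zero_mem _
  have hub : ∀ i, u (b i) ≤ c i := fun i => hmemcoset i (b i) (hbicoset i)
  have hubreal : ∀ i : Fin m, u (b i) = (((u (b i)).toReal : ℝ) : EReal) :=
    fun i => vvv_u_real hubot hured (b.ne_zero i)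
  have hcbot : ∀ i, c i ≠ ⊥ := by
    intro i h
    have := hub i
    rw [h, le_bot_iff] at this
    exact hubot (b i) this
  -- generic construction of near-optimal coset representatives
  have hchoice : ∀ t : Fin m → ℝ, (∀ i, (t i : EReal) < c i) →
      ∃ y : Fin m → E,
        (∀ i, y i - b i ∈ Submodule.span K (⇑b '' {j : Fin m | j < i}))
        ∧ (∀ i, (t i : EReal) < u (y i)) := by
    intro t ht
    have hex : ∀ i : Fin m, ∃ w : E,
        (w - b i ∈ Submodule.span K (⇑b '' {j : Fin m | j < i})) ∧ (t i : EReal) < u w := by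
      intro i
      obtain ⟨x, hxS, hx⟩ := lt_sSup_iff.1 (ht i)
      obtain ⟨w, hw, rfl⟩ := hxS
      exact ⟨w, hw, hx⟩
    choose y hy1 hy2 using hex
    exact ⟨y, hy1, hy2⟩
  by_cases htop : ∃ j, c j = ⊤
  · -- some coset value is infinite: both sides are ⊤
    obtain ⟨j, hcj⟩ := htop
    have hrhs : ∑ i, c i = ⊤ :=
      vvv_sum_top Finset.univ c (Finset.mem_univ j) hcj (fun i _ => hcbot i)
    rw [hrhs]
    apply vvv_eq_top_of_forall
    intro r
    set s0 : ℝ := ∑ i ∈ Finset.univ.erase j, ((u (b i)).toReal - 1) with hs0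
    set t : Fin m → ℝ := fun i => if i = j then r - s0 else (u (b i)).toReal - 1 with htdef
    have ht : ∀ i, (t i : EReal) < c i := by
      intro i
      by_cases hij : i = j
      · rw [hij, htdef]
        simp only [if_pos rfl]
        rw [hcj]
        exact EReal.coe_lt_top _
      · rw [htdef]
        simp only [if_neg hij]
        refine lt_of_lt_of_le ?_ (hub i)
        calc (((u (b i)).toReal - 1 : ℝ) : EReal)
            < (((u (b i)).toReal : ℝ) : EReal) := by
              rw [EReal.coe_lt_coe_iff]; linarith
          _ = u (b i) := (hubreal i).symm
    obtain ⟨y, hy1, hy2⟩ := hchoice t ht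
    have hlow := vvv_lower hv0 hvbot hvmul hker husmul b y hy1
    refine le_trans ?_ hlow
    have hsplit : ∑ i, u (y i) = u (y j) + ∑ i ∈ Finset.univ.erase j, u (y i) :=
      (Finset.add_sum_erase Finset.univ (fun i => u (y i)) (Finset.mem_univ j)).symm
    have hrest : ∑ i ∈ Finset.univ.erase j, ((t i : ℝ) : EReal) ≤
        ∑ i ∈ Finset.univ.erase j, u (y i) :=
      Finset.sum_le_sum fun i hi => le_of_lt (hy2 i)
    have hrestval : ∑ i ∈ Finset.univ.erase j, ((t i : ℝ) : EReal) = (s0 : EReal) := by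
      rw [← vvv_coe_sum]
      congr 1
      rw [hs0]
      refine Finset.sum_congr rfl fun i hi => ?_
      have hij : i ≠ j := (Finset.mem_erase.1 hi).1
      rw [htdef]
      simp only [if_neg hij]
    calc (r : EReal) = (((r - s0 : ℝ) + s0 : ℝ) : EReal) := by norm_num
      _ = ((r - s0 : ℝ) : EReal) + (s0 : EReal) := EReal.coe_add _ _
      _ ≤ u (y j) + ∑ i ∈ Finset.univ.erase j, u (y i) := by
          refine add_le_add ?_ ?_
          · refine le_of_lt ?_
            have := hy2 j
            rw [htdef] at this
            simpa using this
          · rw [← hrestval]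
            exact hrest
      _ = ∑ i, u (y i) := hsplit.symm
  · push_neg at htop
    have hcreal : ∀ i, c i = (((c i).toReal : ℝ) : EReal) :=
      fun i => (EReal.coe_toReal (htop i) (hcbot i)).symm
    set rc : Fin m → ℝ := fun i => (c i).toReal with hrc
    have hsumc : ∑ i, c i = ((∑ i, rc i : ℝ) : EReal) := by
      rw [vvv_coe_sum]
      exact Finset.sum_congr rfl fun i _ => hcreal i
    rw [hsumc]
    apply le_antisymm
    · -- upper bound
      apply vvv_le_of_forall_pos
      intro ε' hε'
      set δ : ℝ := ε' / (m * m + 1) with hδ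
      have hδpos : 0 < δ := by positivity
      have ht : ∀ i, ((rc i - δ : ℝ) : EReal) < c i := by
        intro i
        rw [hcreal i, EReal.coe_lt_coe_iff]
        have : (rc i : ℝ) = (c i).toReal := rfl
        linarith [hδpos]
      obtain ⟨y, hy1, hy2⟩ := hchoice _ ht
      have hyle : ∀ i, u (y i) ≤ c i := fun i => hmemcoset i (y i) (hy1 i)
      have hyreal : ∀ i, u (y i) ≠ ⊤ := by
        intro i
        have := lt_of_le_of_lt (hyle i) (by rw [hcreal i]; exact EReal.coe_lt_top _)
        exact this.ne
      have hyc : ∀ (i : Fin m) (w : E),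
          w - b i ∈ Submodule.span K (⇑b '' {j : Fin m | j < i}) →
          u w ≤ u (y i) + (δ : EReal) := by
        intro i w hw
        refine le_trans (hmemcoset i w hw) ?_
        calc c i = ((rc i : ℝ) : EReal) := hcreal i
          _ = ((rc i - δ : ℝ) : EReal) + (δ : EReal) := by
              rw [← EReal.coe_add]
              norm_num
          _ ≤ u (y i) + (δ : EReal) := add_le_add_left (le_of_lt (hy2 i)) _
      have hupper := vvv_upper hv0 hvbot hvmul hvadd hker hubot husmul huadd hured
        b y hy1 hδpos hyreal hyc
      refine le_trans hupper ?_
      have h1 : ∑ i, u (y i) ≤ ((∑ i, rc i : ℝ) : EReal) := by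
        rw [← hsumc]
        exact Finset.sum_le_sum fun i _ => hyle i
      calc (∑ i, u (y i)) + (((m : ℝ) * ((m : ℝ) * δ) : ℝ) : EReal)
          ≤ ((∑ i, rc i : ℝ) : EReal) + (((m : ℝ) * ((m : ℝ) * δ) : ℝ) : EReal) :=
            add_le_add_left h1 _
        _ = (((∑ i, rc i) + (m : ℝ) * ((m : ℝ) * δ) : ℝ) : EReal) := (EReal.coe_add _ _).symm
        _ ≤ (((∑ i, rc i) + ε' : ℝ) : EReal) := by
            rw [EReal.coe_le_coe_iff]
            have hle : (m : ℝ) * ((m : ℝ) * δ) ≤ ε' := by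
              have h2 : (0:ℝ) < (m:ℝ) * (m:ℝ) + 1 := by positivity
              calc (m:ℝ) * ((m:ℝ) * δ)
                  = ε' * ((m:ℝ) * (m:ℝ) * ((m:ℝ) * (m:ℝ) + 1)⁻¹) := by
                    rw [hδ, div_eq_mul_inv]; push_cast; ring
                _ ≤ ε' * 1 := by
                    refine mul_le_mul_of_nonneg_left ?_ (le_of_lt hε')
                    rw [mul_inv_le_iff₀ h2]
                    linarith
                _ = ε' := mul_one _
            linarith
    · -- lower bound
      apply vvv_ge_of_forall_pos
      intro ε' hε'
      set δ : ℝ := ε' / (m + 1) with hδ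
      have hδpos : 0 < δ := by positivity
      have ht : ∀ i, ((rc i - δ : ℝ) : EReal) < c i := by
        intro i
        rw [hcreal i, EReal.coe_lt_coe_iff]
        linarith [hδpos]
      obtain ⟨y, hy1, hy2⟩ := hchoice _ ht
      have hlow := vvv_lower hv0 hvbot hvmul hker husmul b y hy1
      refine le_trans ?_ hlow
      calc ((∑ i, rc i - ε' : ℝ) : EReal)
          ≤ ((∑ i, (rc i - δ) : ℝ) : EReal) := by
            rw [EReal.coe_le_coe_iff, Finset.sum_sub_distrib, Finset.sum_const,
              Finset.card_univ, Fintype.card_fin, nsmul_eq_mul]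
            have : (m : ℝ) * δ ≤ ε' := by
              rw [hδ]
              rw [div_eq_mul_inv]
              have h2 : (0:ℝ) < (m:ℝ) + 1 := by positivity
              calc (m:ℝ) * (ε' * ((m:ℝ)+1)⁻¹) = ε' * ((m:ℝ) * ((m:ℝ)+1)⁻¹) := by ring
                _ ≤ ε' * 1 := by
                    refine mul_le_mul_of_nonneg_left ?_ (le_of_lt hε')
                    rw [mul_inv_le_iff₀ h2]
                    linarith
                _ = ε' := mul_one _
            linarith
        _ = ∑ i, ((rc i - δ : ℝ) : EReal) := vvv_coe_sum _ _
        _ ≤ ∑ i, u (y i) := Finset.sum_le_sum fun i _ => le_of_lt (hy2 i)
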